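/- Every n×n symmetric real matrix M satisfying M_{ii} + M_{jj} ≤ 2·M_{ij} for all i, j can be written as the entrywise minimum of at most max{n, ⌊n²/4⌋} tropical rank-1 symmetric matrices. In particular, every symmetric matrix of finite symmetric Barvinok rank has rank at most max{n, ⌊n²/4⌋}. -/

import Mathlib

/-- `M` equals the entrywise (tropical) minimum of the family of matrices `N k`. -/
def TropMinDecomp {n r : ℕ} (M : Fin n → Fin n → ℝ) (N : Fin r → Fin n → Fin n → ℝ) : Prop :=
  ∀ i j, (∀ k, M i j ≤ N k i j) ∧ (∃ k, M i j = N k i j)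

/-- `M` has symmetric Barvinok rank at most `r`. -/
def SymRankLe {n : ℕ} (r : ℕ) (M : Fin n → Fin n → ℝ) : Prop :=
  ∃ v : Fin r → Fin n → ℝ, TropMinDecomp M (fun k i j => v k i + v k j)

namespace Stmt4Aux

variable {n : ℕ}

/-- Tropical rank-1 "cherry" vector centered at `c` with leaves `a`, `b`. -/
noncomputable def chv (M : Fin n → Fin n → ℝ) (hi : ℝ) (c a b : Fin n) : Fin n → ℝ := fun z =>
  if z = c then M c c / 2
  else if z = a then M c a - M c c / 2
  else if z = b then M c b - M c c / 2
  else |hi| + |M c c / 2| + |M c a - M c c / 2| + |M c b - M c c / 2|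

lemma chv_dom (M : Fin n → Fin n → ℝ) (hi : ℝ)
    (hsym : ∀ i j, M i j = M j i) (h : ∀ i j, M i i + M j j ≤ 2 * M i j)
    (hhi : ∀ i j, M i j ≤ hi) (c a b : Fin n)
    (hcond : M a b + M c c ≤ M c a + M c b) :
    ∀ i j, M i j ≤ chv M hi c a b i + chv M hi c a b j := by
  intro i j
  have Hhi : hi ≤ |hi| := le_abs_self hi
  have P0 : (0:ℝ) ≤ |hi| := abs_nonneg _
  have N1 : -|M c c / 2| ≤ M c c / 2 := neg_abs_le _
  have N2 : -|M c a - M c c / 2| ≤ M c a - M c c / 2 := neg_abs_le _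
  have N3 : -|M c b - M c c / 2| ≤ M c b - M c c / 2 := neg_abs_le _
  have P1 : (0:ℝ) ≤ |M c c / 2| := abs_nonneg _
  have P2 : (0:ℝ) ≤ |M c a - M c c / 2| := abs_nonneg _
  have P3 : (0:ℝ) ≤ |M c b - M c c / 2| := abs_nonneg _
  have F1 := h c a
  have F2 := h c b
  have F3 := h c c
  have S1 := hsym a c
  have S2 := hsym b c
  have S3 := hsym b a
  have Hij := hhi i j
  have Hic := hhi i c
  have Hia := hhi i a
  have Hib := hhi i b
  have Hcj := hhi c j
  have Haj := hhi a j
  have Hbj := hhi b j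
  simp only [chv]
  split_ifs <;> subst_vars <;> linarith

lemma chv_at_c (M : Fin n → Fin n → ℝ) (hi : ℝ) (c a b : Fin n) :
    chv M hi c a b c = M c c / 2 := by simp [chv]

lemma chv_at_a (M : Fin n → Fin n → ℝ) (hi : ℝ) (c a b : Fin n) :
    chv M hi c a b a = if a = c then M c c / 2 else M c a - M c c / 2 := by
  by_cases hac : a = c <;> simp [chv, hac]

lemma chv_at_b (M : Fin n → Fin n → ℝ) (hi : ℝ) (c a b : Fin n) :
    chv M hi c a b b =
      if b = c then M c c / 2 else if b = a then M c a - M c c / 2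
        else M c b - M c c / 2 := by
  by_cases hbc : b = c
  · simp [chv, hbc]
  · by_cases hba : b = a <;> simp [chv, hbc, hba]

lemma chv_cc (M : Fin n → Fin n → ℝ) (hi : ℝ) (c a b : Fin n) :
    M c c = chv M hi c a b c + chv M hi c a b c := by
  rw [chv_at_c]; ring

lemma chv_ca (M : Fin n → Fin n → ℝ) (hi : ℝ) (c a b : Fin n) :
    M c a = chv M hi c a b c + chv M hi c a b a := by
  rw [chv_at_c, chv_at_a]
  split_ifs with h1
  · rw [h1]; ring
  · ring

lemma chv_cb (M : Fin n → Fin n → ℝ) (hi : ℝ) (c a b : Fin n) :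
    M c b = chv M hi c a b c + chv M hi c a b b := by
  rw [chv_at_c, chv_at_b]
  split_ifs with h1 h2
  · rw [h1]; ring
  · rw [h2]; ring
  · ring

/-- `M i j` is achieved by some vector in the list `L`. -/
def Ach (M : Fin n → Fin n → ℝ) (L : List (Fin n → ℝ)) (i j : Fin n) : Prop :=
  ∃ v ∈ L, M i j = v i + v j

lemma Ach_symm (M : Fin n → Fin n → ℝ) (hsym : ∀ i j, M i j = M j i)
    {L : List (Fin n → ℝ)} {i j : Fin n} (hA : Ach M L i j) : Ach M L j i := by
  obtain ⟨v, hv, he⟩ := hA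
  exact ⟨v, hv, by rw [hsym j i, he, add_comm]⟩

lemma Ach_mono (M : Fin n → Fin n → ℝ) {L L' : List (Fin n → ℝ)} {i j : Fin n}
    (hsub : ∀ v ∈ L, v ∈ L') (hA : Ach M L i j) : Ach M L' i j := by
  obtain ⟨v, hv, he⟩ := hA; exact ⟨v, hsub v hv, he⟩

lemma exists_min_pair (M : Fin n → Fin n → ℝ) (S : Finset (Fin n)) (hS : 2 ≤ S.card) :
    ∃ p ∈ S, ∃ q ∈ S, p ≠ q ∧ ∀ a ∈ S, ∀ b ∈ S, a ≠ b →
      2 * M p q - M p p - M q q ≤ 2 * M a b - M a a - M b b := by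
  classical
  set T := (S ×ˢ S).filter (fun pr => pr.1 ≠ pr.2) with hT
  have hTne : T.Nonempty := by
    obtain ⟨a, ha, b, hb, hab⟩ := Finset.one_lt_card.mp (show 1 < S.card by omega)
    exact ⟨(a, b), by simp [hT, Finset.mem_filter, Finset.mem_product, ha, hb, hab]⟩
  obtain ⟨pr, hpr, hmin⟩ :=
    T.exists_min_image (fun pr => 2 * M pr.1 pr.2 - M pr.1 pr.1 - M pr.2 pr.2) hTne
  rw [hT, Finset.mem_filter, Finset.mem_product] at hpr
  refine ⟨pr.1, hpr.1.1, pr.2, hpr.1.2, hpr.2, fun a ha b hb hab => ?_⟩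
  exact hmin (a, b) (by simp [hT, Finset.mem_filter, Finset.mem_product, ha, hb, hab])

/-- One "round": covers all off-diagonal pairs meeting `{p,q}` and all diagonal
entries except possibly `j₀`, using `S.card - 1` vectors. -/
lemma round (M : Fin n → Fin n → ℝ) (hi : ℝ)
    (hsym : ∀ i j, M i j = M j i) (h : ∀ i j, M i i + M j j ≤ 2 * M i j)
    (hhi : ∀ i j, M i j ≤ hi)
    (S : Finset (Fin n)) (p q j₀ : Fin n)
    (hp : p ∈ S) (hq : q ∈ S) (hj : j₀ ∈ S)
    (hpq : p ≠ q) (hjp : j₀ ≠ p) (hjq : j₀ ≠ q)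
    (hmin : ∀ a ∈ S, ∀ b ∈ S, a ≠ b →
      2 * M p q - M p p - M q q ≤ 2 * M a b - M a a - M b b) :
    ∃ L : List (Fin n → ℝ), L.length + 1 = S.card ∧
      (∀ v ∈ L, ∀ i j, M i j ≤ v i + v j) ∧
      Ach M L p q ∧
      (∀ j ∈ S, j ≠ p → j ≠ q → Ach M L p j ∧ Ach M L q j) ∧
      (∀ i ∈ S, i ≠ j₀ → Ach M L i i) := by
  classical
  -- condition for the generic cherries
  have hcond : ∀ j ∈ S, j ≠ p → j ≠ q → M p q + M j j ≤ M j p + M j q := by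
    intro j hjS hjp' hjq'
    have h1 := hmin j hjS p hp hjp'
    have h2 := h j q
    linarith
  -- the generic cherry list
  set Rest : Finset (Fin n) := (S.erase p).erase q with hRest
  have hRestcard : Rest.card + 2 = S.card := by
    have e1 : (S.erase p).card = S.card - 1 := Finset.card_erase_of_mem hp
    have e2 : Rest.card = (S.erase p).card - 1 := by
      rw [hRest]
      exact Finset.card_erase_of_mem (Finset.mem_erase.mpr ⟨hpq.symm, hq⟩)
    have h2 : 2 ≤ S.card := Finset.one_lt_card.mpr ⟨p, hp, q, hq, hpq⟩
    omega
  have hj₀Rest : j₀ ∈ Rest := by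
    rw [hRest]; exact Finset.mem_erase.mpr ⟨hjq, Finset.mem_erase.mpr ⟨hjp, hj⟩⟩
  set Rest' : Finset (Fin n) := Rest.erase j₀ with hRest'
  have hRest'card : Rest'.card + 3 = S.card := by
    have e : Rest'.card = Rest.card - 1 := by
      rw [hRest']; exact Finset.card_erase_of_mem hj₀Rest
    have : 1 ≤ Rest.card := Finset.card_pos.mpr ⟨j₀, hj₀Rest⟩
    omega
  set Cher : List (Fin n → ℝ) := Rest'.toList.map (fun j => chv M hi j p q) with hCher
  have hCherLen : Cher.length + 3 = S.card := by
    rw [hCher, List.length_map, Finset.length_toList]; exact hRest'card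
  have memRest : ∀ j, j ∈ Rest' → j ∈ S ∧ j ≠ p ∧ j ≠ q ∧ j ≠ j₀ := by
    intro j hjm
    rw [hRest', Finset.mem_erase, hRest, Finset.mem_erase, Finset.mem_erase] at hjm
    exact ⟨hjm.2.2.2, hjm.2.2.1, hjm.2.1, hjm.1⟩
  have CherGood : ∀ v ∈ Cher, ∀ i j, M i j ≤ v i + v j := by
    intro v hv
    rw [hCher, List.mem_map] at hv
    obtain ⟨j, hjm, rfl⟩ := hv
    obtain ⟨hjS, hjp', hjq', -⟩ := memRest j (Finset.mem_toList.mp hjm)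
    exact chv_dom M hi hsym h hhi j p q (by
      have := hcond j hjS hjp' hjq'
      linarith [hsym p q])
  have CherAch : ∀ j ∈ S, j ≠ p → j ≠ q → j ≠ j₀ → Ach M Cher p j ∧ Ach M Cher q j ∧ Ach M Cher j j := by
    intro j hjS hjp' hjq' hjj₀
    have hjm : j ∈ Rest' := by
      rw [hRest', Finset.mem_erase, hRest, Finset.mem_erase, Finset.mem_erase]
      exact ⟨hjj₀, hjq', hjp', hjS⟩
    have hmem : chv M hi j p q ∈ Cher := by
      rw [hCher, List.mem_map]; exact ⟨j, Finset.mem_toList.mpr hjm, rfl⟩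
    refine ⟨⟨_, hmem, ?_⟩, ⟨_, hmem, ?_⟩, ⟨_, hmem, ?_⟩⟩
    · rw [hsym p j, add_comm]; exact chv_ca M hi j p q
    · rw [hsym q j, add_comm]; exact chv_cb M hi j p q
    · exact chv_cc M hi j p q
  -- the two special vectors, by the A/B case analysis
  rcases le_or_gt (M q j₀ + M p p) (M p q + M p j₀) with hA | hB
  · -- case A : cherry centered at p over {q, j₀}, single centered at q towards j₀
    refine ⟨chv M hi p q j₀ :: chv M hi q j₀ j₀ :: Cher, by simpa using hCherLen, ?_, ?_, ?_, ?_⟩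
    · intro v hv
      simp only [List.mem_cons] at hv
      rcases hv with rfl | rfl | h'
      · exact chv_dom M hi hsym h hhi p q j₀ hA
      · exact chv_dom M hi hsym h hhi q j₀ j₀ (by linarith [h q j₀])
      · exact CherGood _ h'
    · exact ⟨chv M hi p q j₀, List.mem_cons_self, chv_ca M hi p q j₀⟩
    · intro j hjS hjp' hjq'
      by_cases hjj₀ : j = j₀
      · subst hjj₀
        exact ⟨⟨chv M hi p q j, List.mem_cons_self, chv_cb M hi p q j⟩,
          ⟨chv M hi q j j, List.mem_cons_of_mem _ (List.mem_cons_self), chv_ca M hi q j j⟩⟩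
      · obtain ⟨a1, a2, -⟩ := CherAch j hjS hjp' hjq' hjj₀
        have sub : ∀ v ∈ Cher, v ∈ chv M hi p q j₀ :: chv M hi q j₀ j₀ :: Cher := by
          intro v hv; simp [hv]
        exact ⟨Ach_mono M sub a1, Ach_mono M sub a2⟩
    · intro i hiS hij₀
      by_cases hip : i = p
      · subst hip; exact ⟨chv M hi i q j₀, List.mem_cons_self, chv_cc M hi i q j₀⟩
      · by_cases hiq : i = q
        · subst hiq
          exact ⟨chv M hi i j₀ j₀, List.mem_cons_of_mem _ (List.mem_cons_self),
            chv_cc M hi i j₀ j₀⟩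
        · obtain ⟨-, -, a3⟩ := CherAch i hiS hip hiq hij₀
          exact Ach_mono M (by intro v hv; simp [hv]) a3
  · -- case B : cherry centered at q over {p, j₀}, single centered at p towards j₀
    have hBcond : M p j₀ + M q q ≤ M q p + M q j₀ := by
      have := h p q; linarith [hsym p q]
    refine ⟨chv M hi q p j₀ :: chv M hi p j₀ j₀ :: Cher, by simpa using hCherLen, ?_, ?_, ?_, ?_⟩
    · intro v hv
      simp only [List.mem_cons] at hv
      rcases hv with rfl | rfl | h'
      · exact chv_dom M hi hsym h hhi q p j₀ hBcond
      · exact chv_dom M hi hsym h hhi p j₀ j₀ (by linarith [h p j₀])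
      · exact CherGood _ h'
    · refine ⟨chv M hi q p j₀, List.mem_cons_self, ?_⟩
      rw [hsym p q, add_comm]; exact chv_ca M hi q p j₀
    · intro j hjS hjp' hjq'
      by_cases hjj₀ : j = j₀
      · subst hjj₀
        exact ⟨⟨chv M hi p j j, List.mem_cons_of_mem _ (List.mem_cons_self),
          chv_ca M hi p j j⟩, ⟨chv M hi q p j, List.mem_cons_self, chv_cb M hi q p j⟩⟩
      · obtain ⟨a1, a2, -⟩ := CherAch j hjS hjp' hjq' hjj₀
        have sub : ∀ v ∈ Cher, v ∈ chv M hi q p j₀ :: chv M hi p j₀ j₀ :: Cher := by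
          intro v hv; simp [hv]
        exact ⟨Ach_mono M sub a1, Ach_mono M sub a2⟩
    · intro i hiS hij₀
      by_cases hip : i = p
      · subst hip
        exact ⟨chv M hi i j₀ j₀, List.mem_cons_of_mem _ (List.mem_cons_self),
          chv_cc M hi i j₀ j₀⟩
      · by_cases hiq : i = q
        · subst hiq; exact ⟨chv M hi i p j₀, List.mem_cons_self, chv_cc M hi i p j₀⟩
        · obtain ⟨-, -, a3⟩ := CherAch i hiS hip hiq hij₀
          exact Ach_mono M (by intro v hv; simp [hv]) a3

/-- the cherry condition for the two non-minimal edges of a triangle over the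
minimal pair `(p, q)` of `S`. -/
lemma tri_cond (M : Fin n → Fin n → ℝ)
    (h : ∀ i j, M i i + M j j ≤ 2 * M i j) {S : Finset (Fin n)} {p q : Fin n}
    (hp : p ∈ S) (hq : q ∈ S)
    (hmin : ∀ a ∈ S, ∀ b ∈ S, a ≠ b →
      2 * M p q - M p p - M q q ≤ 2 * M a b - M a a - M b b)
    {j : Fin n} (hjS : j ∈ S) (hjp : j ≠ p) : M p q + M j j ≤ M j p + M j q := by
  have h1 := hmin j hjS p hp hjp
  have h2 := h j q
  linarith

/-- Main induction: on a set `S` of at least two vertices, all the off-diagonal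
entries of `S × S` plus the diagonal entry at `w` can be achieved by at most
`⌊card S ^ 2 / 4⌋` dominating rank-one vectors. -/
lemma mainQ (M : Fin n → Fin n → ℝ) (hi : ℝ)
    (hsym : ∀ i j, M i j = M j i) (h : ∀ i j, M i i + M j j ≤ 2 * M i j)
    (hhi : ∀ i j, M i j ≤ hi) :
    ∀ m : ℕ, ∀ S : Finset (Fin n), ∀ w : Fin n, S.card = m → w ∈ S → 2 ≤ m →
    ∃ L : List (Fin n → ℝ), L.length ≤ m ^ 2 / 4 ∧
      (∀ v ∈ L, ∀ i j, M i j ≤ v i + v j) ∧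
      (∀ i ∈ S, ∀ j ∈ S, i ≠ j → Ach M L i j) ∧ Ach M L w w := by
  intro m
  induction m using Nat.strong_induction_on with
  | _ m ih =>
  intro S w hcard hw hm
  classical
  by_cases hm4 : 4 ≤ m
  · -- inductive step
    obtain ⟨p, hp, q, hq, hpq, hmin⟩ := exists_min_pair M S (by omega)
    set S' : Finset (Fin n) := (S.erase p).erase q with hS'
    have hS'card : S'.card + 2 = m := by
      have e1 : (S.erase p).card = S.card - 1 := Finset.card_erase_of_mem hp
      have e2 : S'.card = (S.erase p).card - 1 := by
        rw [hS']
        exact Finset.card_erase_of_mem (Finset.mem_erase.mpr ⟨hpq.symm, hq⟩)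
      omega
    have hS'mem : ∀ x, x ∈ S' ↔ (x ≠ q ∧ x ≠ p ∧ x ∈ S) := by
      intro x; rw [hS', Finset.mem_erase, Finset.mem_erase]
    obtain ⟨x₀, hx₀⟩ : S'.Nonempty := Finset.card_pos.mp (by omega)
    obtain ⟨j₀, hj₀S', hj₀w⟩ : ∃ j₀, j₀ ∈ S' ∧ (w ∈ S' → j₀ = w) := by
      by_cases hwS' : w ∈ S'
      · exact ⟨w, hwS', fun _ => rfl⟩
      · exact ⟨x₀, hx₀, fun hc => absurd hc hwS'⟩
    have hj₀ : j₀ ≠ q ∧ j₀ ≠ p ∧ j₀ ∈ S := (hS'mem j₀).mp hj₀S'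
    obtain ⟨L₁, hL₁len, hL₁good, hL₁pq, hL₁side, hL₁diag⟩ :=
      round M hi hsym h hhi S p q j₀ hp hq hj₀.2.2 hpq hj₀.2.1 hj₀.1 hmin
    obtain ⟨L₂, hL₂len, hL₂good, hL₂edge, hL₂diag⟩ :=
      ih (m - 2) (by omega) S' j₀ (by omega) hj₀S' (by omega)
    have memL : ∀ v ∈ L₁, v ∈ L₁ ++ L₂ := fun v hv => List.mem_append_left _ hv
    have memR : ∀ v ∈ L₂, v ∈ L₁ ++ L₂ := fun v hv => List.mem_append_right _ hv
    have roundE : ∀ i ∈ S, ∀ j ∈ S, i ≠ j → (i = p ∨ i = q) → Ach M L₁ i j := by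
      intro i hiS j hjS hij hipq
      rcases hipq with rfl | rfl
      · by_cases hjq : j = q
        · subst hjq; exact hL₁pq
        · exact (hL₁side j hjS (Ne.symm hij) hjq).1
      · by_cases hjp : j = p
        · subst hjp; exact Ach_symm M hsym hL₁pq
        · exact (hL₁side j hjS hjp (Ne.symm hij)).2
    refine ⟨L₁ ++ L₂, ?_, ?_, ?_, ?_⟩
    · -- length bound
      obtain ⟨k, rfl⟩ : ∃ k, m = k + 2 := ⟨m - 2, by omega⟩
      have e2 : (k + 2) ^ 2 = k ^ 2 + 4 * (k + 1) := by ring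
      have e1 : (k + 2) ^ 2 / 4 = k ^ 2 / 4 + (k + 1) := by
        rw [e2, Nat.add_mul_div_left _ _ (by norm_num : 0 < 4)]
      rw [List.length_append, e1]
      have : k + 2 - 2 = k := by omega
      rw [this] at hL₂len
      omega
    · intro v hv
      rcases List.mem_append.mp hv with h' | h'
      · exact hL₁good v h'
      · exact hL₂good v h'
    · intro i hiS j hjS hij
      by_cases hipq : i = p ∨ i = q
      · exact Ach_mono M memL (roundE i hiS j hjS hij hipq)
      · by_cases hjpq : j = p ∨ j = q
        · exact Ach_symm M hsym (Ach_mono M memL (roundE j hjS i hiS (Ne.symm hij) hjpq))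
        · push_neg at hipq hjpq
          have hiS' : i ∈ S' := (hS'mem i).mpr ⟨hipq.2, hipq.1, hiS⟩
          have hjS' : j ∈ S' := (hS'mem j).mpr ⟨hjpq.2, hjpq.1, hjS⟩
          exact Ach_mono M memR (hL₂edge i hiS' j hjS' hij)
    · by_cases hwS' : w ∈ S'
      · rw [← hj₀w hwS']
        exact Ach_mono M memR hL₂diag
      · have hwj₀ : w ≠ j₀ := fun e => hwS' (e ▸ hj₀S')
        exact Ach_mono M memL (hL₁diag w hw hwj₀)
  · -- base cases : m = 2 or m = 3
    by_cases hm3 : m = 3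
    · subst hm3
      obtain ⟨p, hp, q, hq, hpq, hmin⟩ := exists_min_pair M S (by omega)
      have hrex : ((S.erase p).erase q).Nonempty := by
        apply Finset.card_pos.mp
        have e1 : (S.erase p).card = S.card - 1 := Finset.card_erase_of_mem hp
        have e2 : ((S.erase p).erase q).card = (S.erase p).card - 1 :=
          Finset.card_erase_of_mem (Finset.mem_erase.mpr ⟨hpq.symm, hq⟩)
        omega
      obtain ⟨r, hr⟩ := hrex
      rw [Finset.mem_erase, Finset.mem_erase] at hr
      obtain ⟨hrq, hrp, hrS⟩ := hr
      have hS3 : S = {p, q, r} := by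
        have hsub : ({p, q, r} : Finset (Fin n)) ⊆ S := by
          intro x hx
          simp only [Finset.mem_insert, Finset.mem_singleton] at hx
          rcases hx with rfl | rfl | rfl <;> assumption
        have hcard3 : ({p, q, r} : Finset (Fin n)).card = 3 := by
          rw [Finset.card_insert_of_notMem (by simp [hpq, hrp.symm]),
            Finset.card_insert_of_notMem (by simp [hrq.symm]), Finset.card_singleton]
        exact (Finset.eq_of_subset_of_card_le hsub (by omega)).symm
      have hmem3 : ∀ x ∈ S, x = p ∨ x = q ∨ x = r := by
        intro x hx; rw [hS3] at hx; simpa using hx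
      have condr : M p q + M r r ≤ M r p + M r q := tri_cond M h hp hq hmin hrS hrp
      by_cases hwr : w = r
      · subst hwr
        refine ⟨[chv M hi w p q, chv M hi p q q], by norm_num, ?_, ?_, ?_⟩
        · intro v hv
          simp only [List.mem_cons, List.not_mem_nil, or_false] at hv
          rcases hv with rfl | rfl
          · exact chv_dom M hi hsym h hhi w p q condr
          · exact chv_dom M hi hsym h hhi p q q (by linarith [h p q])
        · have E1 : Ach M [chv M hi w p q, chv M hi p q q] w p :=
            ⟨chv M hi w p q, List.mem_cons_self, chv_ca M hi w p q⟩
          have E2 : Ach M [chv M hi w p q, chv M hi p q q] w q :=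
            ⟨chv M hi w p q, List.mem_cons_self, chv_cb M hi w p q⟩
          have E3 : Ach M [chv M hi w p q, chv M hi p q q] p q :=
            ⟨chv M hi p q q, List.mem_cons_of_mem _ (List.mem_cons_self),
              chv_ca M hi p q q⟩
          intro i hiS j hjS hij
          rcases hmem3 i hiS with rfl | rfl | rfl <;> rcases hmem3 j hjS with rfl | rfl | rfl <;>
            first
              | exact absurd rfl hij
              | assumption
              | exact Ach_symm M hsym (by assumption)
        · exact ⟨chv M hi w p q, List.mem_cons_self, chv_cc M hi w p q⟩
      · have hwpq : w = p ∨ w = q := by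
          rcases hmem3 w hw with h' | h' | h'
          · exact Or.inl h'
          · exact Or.inr h'
          · exact absurd h' hwr
        rcases le_or_gt (M q r + M p p) (M p q + M p r) with hA | hB
        · refine ⟨[chv M hi p q r, chv M hi q r r], by norm_num, ?_, ?_, ?_⟩
          · intro v hv
            simp only [List.mem_cons, List.not_mem_nil, or_false] at hv
            rcases hv with rfl | rfl
            · exact chv_dom M hi hsym h hhi p q r hA
            · exact chv_dom M hi hsym h hhi q r r (by linarith [h q r])
          · have E1 : Ach M [chv M hi p q r, chv M hi q r r] p q :=
              ⟨chv M hi p q r, List.mem_cons_self, chv_ca M hi p q r⟩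
            have E2 : Ach M [chv M hi p q r, chv M hi q r r] p r :=
              ⟨chv M hi p q r, List.mem_cons_self, chv_cb M hi p q r⟩
            have E3 : Ach M [chv M hi p q r, chv M hi q r r] q r :=
              ⟨chv M hi q r r, List.mem_cons_of_mem _ (List.mem_cons_self),
                chv_ca M hi q r r⟩
            intro i hiS j hjS hij
            rcases hmem3 i hiS with rfl | rfl | rfl <;>
              rcases hmem3 j hjS with rfl | rfl | rfl <;>
              first
                | exact absurd rfl hij
                | assumption
                | exact Ach_symm M hsym (by assumption)
          · rcases hwpq with rfl | rfl
            · exact ⟨chv M hi w q r, List.mem_cons_self, chv_cc M hi w q r⟩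
            · exact ⟨chv M hi w r r, List.mem_cons_of_mem _ (List.mem_cons_self),
                chv_cc M hi w r r⟩
        · have hBcond : M p r + M q q ≤ M q p + M q r := by
            have := h p q; linarith [hsym p q]
          refine ⟨[chv M hi q p r, chv M hi p r r], by norm_num, ?_, ?_, ?_⟩
          · intro v hv
            simp only [List.mem_cons, List.not_mem_nil, or_false] at hv
            rcases hv with rfl | rfl
            · exact chv_dom M hi hsym h hhi q p r hBcond
            · exact chv_dom M hi hsym h hhi p r r (by linarith [h p r])
          · have E1 : Ach M [chv M hi q p r, chv M hi p r r] q p :=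
              ⟨chv M hi q p r, List.mem_cons_self, chv_ca M hi q p r⟩
            have E2 : Ach M [chv M hi q p r, chv M hi p r r] q r :=
              ⟨chv M hi q p r, List.mem_cons_self, chv_cb M hi q p r⟩
            have E3 : Ach M [chv M hi q p r, chv M hi p r r] p r :=
              ⟨chv M hi p r r, List.mem_cons_of_mem _ (List.mem_cons_self),
                chv_ca M hi p r r⟩
            intro i hiS j hjS hij
            rcases hmem3 i hiS with rfl | rfl | rfl <;>
              rcases hmem3 j hjS with rfl | rfl | rfl <;>
              first
                | exact absurd rfl hij
                | assumption
                | exact Ach_symm M hsym (by assumption)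
          · rcases hwpq with rfl | rfl
            · exact ⟨chv M hi w r r, List.mem_cons_of_mem _ (List.mem_cons_self),
                chv_cc M hi w r r⟩
            · exact ⟨chv M hi w p r, List.mem_cons_self, chv_cc M hi w p r⟩
    · -- m = 2
      have hm2 : m = 2 := by omega
      subst hm2
      obtain ⟨x, hx⟩ : (S.erase w).Nonempty := by
        apply Finset.card_pos.mp
        have : (S.erase w).card = S.card - 1 := Finset.card_erase_of_mem hw
        omega
      rw [Finset.mem_erase] at hx
      obtain ⟨hxw, hxS⟩ := hx
      have hS2 : S = {w, x} := by
        have hsub : ({w, x} : Finset (Fin n)) ⊆ S := by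
          intro y hy
          simp only [Finset.mem_insert, Finset.mem_singleton] at hy
          rcases hy with rfl | rfl <;> assumption
        have hcard2 : ({w, x} : Finset (Fin n)).card = 2 := by
          rw [Finset.card_insert_of_notMem (by simp [Ne.symm hxw]), Finset.card_singleton]
        exact (Finset.eq_of_subset_of_card_le hsub (by omega)).symm
      have hmem2 : ∀ y ∈ S, y = w ∨ y = x := by
        intro y hy; rw [hS2] at hy; simpa using hy
      refine ⟨[chv M hi w x x], by norm_num, ?_, ?_, ?_⟩
      · intro v hv
        simp only [List.mem_cons, List.not_mem_nil, or_false] at hv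
        rcases hv with rfl
        exact chv_dom M hi hsym h hhi w x x (by linarith [h w x])
      · have E1 : Ach M [chv M hi w x x] w x :=
          ⟨chv M hi w x x, List.mem_cons_self, chv_ca M hi w x x⟩
        intro i hiS j hjS hij
        rcases hmem2 i hiS with rfl | rfl <;> rcases hmem2 j hjS with rfl | rfl <;>
          first
            | exact absurd rfl hij
            | assumption
            | exact Ach_symm M hsym (by assumption)
      · exact ⟨chv M hi w x x, List.mem_cons_self, chv_cc M hi w x x⟩

/-- Turn a dominating, everywhere-achieving list of vectors into a rank bound. -/
lemma assemble (M : Fin n → Fin n → ℝ) (hi : ℝ) (hhi : ∀ i j, M i j ≤ hi)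
    (r : ℕ) (L : List (Fin n → ℝ)) (hlen : L.length ≤ r)
    (good : ∀ v ∈ L, ∀ i j, M i j ≤ v i + v j)
    (ach : ∀ i j, Ach M L i j) : SymRankLe r M := by
  classical
  refine ⟨fun k => L.getD k (fun _ => |hi|), fun i j => ⟨?_, ?_⟩⟩
  · intro k
    show M i j ≤ L.getD (k : ℕ) (fun _ => |hi|) i + L.getD (k : ℕ) (fun _ => |hi|) j
    by_cases hk : (k : ℕ) < L.length
    · rw [List.getD_eq_getElem _ _ hk]
      exact good _ (List.getElem_mem hk) i j
    · rw [List.getD_eq_default _ _ (by omega)]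
      have h1 := hhi i j
      have h2 := le_abs_self hi
      have h3 := abs_nonneg hi
      linarith
  · obtain ⟨v, hv, he⟩ := ach i j
    obtain ⟨idx, hidx, rfl⟩ := List.mem_iff_getElem.mp hv
    refine ⟨⟨idx, lt_of_lt_of_le hidx hlen⟩, ?_⟩
    show M i j = L.getD idx (fun _ => |hi|) i + L.getD idx (fun _ => |hi|) j
    rw [List.getD_eq_getElem _ _ hidx]
    exact he

end Stmt4Aux

open Stmt4Aux in
theorem stmt4 (n : ℕ) (M : Fin n → Fin n → ℝ) (hsym : ∀ i j, M i j = M j i)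
    (h : ∀ i j, M i i + M j j ≤ 2 * M i j) :
    SymRankLe (max n (n ^ 2 / 4)) M := by
  classical
  rcases Nat.eq_zero_or_pos n with rfl | hn1
  · exact ⟨fun _ _ => 0, fun i => i.elim0⟩
  obtain ⟨hi, hhi⟩ : ∃ c : ℝ, ∀ i j : Fin n, M i j ≤ c := by
    obtain ⟨c, hc⟩ := Finite.exists_le (fun p : Fin n × Fin n => M p.1 p.2)
    exact ⟨c, fun i j => hc (i, j)⟩
  rcases eq_or_lt_of_le (show 1 ≤ n from hn1) with h1 | hn2
  · -- n = 1
    obtain rfl : n = 1 := h1.symm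
    refine ⟨fun _ _ => M 0 0 / 2, fun i j => ⟨fun k => ?_, ⟨0, by norm_num⟩, ?_⟩⟩
    · obtain rfl : i = (0 : Fin 1) := Subsingleton.elim _ _
      obtain rfl : j = (0 : Fin 1) := Subsingleton.elim _ _
      linarith
    · obtain rfl : i = (0 : Fin 1) := Subsingleton.elim _ _
      obtain rfl : j = (0 : Fin 1) := Subsingleton.elim _ _
      ring
  rcases eq_or_lt_of_le (show 2 ≤ n from hn2) with h2 | hn3
  · -- n = 2
    obtain rfl : n = 2 := h2.symm
    refine assemble M hi hhi _ [chv M hi 0 1 1, chv M hi 1 0 0] (by norm_num) ?_ ?_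
    · intro v hv
      simp only [List.mem_cons, List.not_mem_nil, or_false] at hv
      rcases hv with rfl | rfl
      · exact chv_dom M hi hsym h hhi 0 1 1 (by linarith [h (0:Fin 2) 1])
      · exact chv_dom M hi hsym h hhi 1 0 0 (by linarith [h (1:Fin 2) 0])
    · have E1 : Ach M [chv M hi 0 1 1, chv M hi 1 0 0] 0 1 :=
        ⟨chv M hi 0 1 1, List.mem_cons_self, chv_ca M hi 0 1 1⟩
      have E2 : Ach M [chv M hi 0 1 1, chv M hi 1 0 0] 0 0 :=
        ⟨chv M hi 0 1 1, List.mem_cons_self, chv_cc M hi 0 1 1⟩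
      have E3 : Ach M [chv M hi 0 1 1, chv M hi 1 0 0] 1 1 :=
        ⟨chv M hi 1 0 0, List.mem_cons_of_mem _ (List.mem_cons_self), chv_cc M hi 1 0 0⟩
      intro i j
      have hcases : ∀ x : Fin 2, x = 0 ∨ x = 1 := by decide
      rcases hcases i with rfl | rfl <;> rcases hcases j with rfl | rfl <;>
        first
          | assumption
          | exact Ach_symm M hsym (by assumption)
  rcases eq_or_lt_of_le (show 3 ≤ n from hn3) with h3 | hn4
  · -- n = 3
    obtain rfl : n = 3 := h3.symm
    refine assemble M hi hhi _ [chv M hi 0 1 1, chv M hi 1 2 2, chv M hi 2 0 0]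
      (by norm_num) ?_ ?_
    · intro v hv
      simp only [List.mem_cons, List.not_mem_nil, or_false] at hv
      rcases hv with rfl | rfl | rfl
      · exact chv_dom M hi hsym h hhi 0 1 1 (by linarith [h (0:Fin 3) 1])
      · exact chv_dom M hi hsym h hhi 1 2 2 (by linarith [h (1:Fin 3) 2])
      · exact chv_dom M hi hsym h hhi 2 0 0 (by linarith [h (2:Fin 3) 0])
    · have m1 : chv M hi 0 1 1 ∈ [chv M hi 0 1 1, chv M hi 1 2 2, chv M hi 2 0 0] :=
        List.mem_cons_self
      have m2 : chv M hi 1 2 2 ∈ [chv M hi 0 1 1, chv M hi 1 2 2, chv M hi 2 0 0] :=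
        List.mem_cons_of_mem _ (List.mem_cons_self)
      have m3 : chv M hi 2 0 0 ∈ [chv M hi 0 1 1, chv M hi 1 2 2, chv M hi 2 0 0] :=
        List.mem_cons_of_mem _ (List.mem_cons_of_mem _ (List.mem_cons_self))
      have E1 : Ach M [chv M hi 0 1 1, chv M hi 1 2 2, chv M hi 2 0 0] 0 1 :=
        ⟨_, m1, chv_ca M hi 0 1 1⟩
      have E2 : Ach M [chv M hi 0 1 1, chv M hi 1 2 2, chv M hi 2 0 0] 1 2 :=
        ⟨_, m2, chv_ca M hi 1 2 2⟩
      have E3 : Ach M [chv M hi 0 1 1, chv M hi 1 2 2, chv M hi 2 0 0] 2 0 :=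
        ⟨_, m3, chv_ca M hi 2 0 0⟩
      have E4 : Ach M [chv M hi 0 1 1, chv M hi 1 2 2, chv M hi 2 0 0] 0 0 :=
        ⟨_, m1, chv_cc M hi 0 1 1⟩
      have E5 : Ach M [chv M hi 0 1 1, chv M hi 1 2 2, chv M hi 2 0 0] 1 1 :=
        ⟨_, m2, chv_cc M hi 1 2 2⟩
      have E6 : Ach M [chv M hi 0 1 1, chv M hi 1 2 2, chv M hi 2 0 0] 2 2 :=
        ⟨_, m3, chv_cc M hi 2 0 0⟩
      intro i j
      have hcases : ∀ x : Fin 3, x = 0 ∨ x = 1 ∨ x = 2 := by decide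
      rcases hcases i with rfl | rfl | rfl <;> rcases hcases j with rfl | rfl | rfl <;>
        first
          | assumption
          | exact Ach_symm M hsym (by assumption)
  · -- n ≥ 4
    have hn4' : 4 ≤ n := hn4
    have hcardu : (Finset.univ : Finset (Fin n)).card = n := by
      rw [Finset.card_univ, Fintype.card_fin]
    obtain ⟨p, hp, q, hq, hpq, hmin⟩ :=
      exists_min_pair M (Finset.univ : Finset (Fin n)) (by omega)
    set S' : Finset (Fin n) := (Finset.univ.erase p).erase q with hS'
    have hS'card : S'.card + 2 = n := by
      have e1 : (Finset.univ.erase p).card = n - 1 := by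
        rw [Finset.card_erase_of_mem (Finset.mem_univ p), hcardu]
      have e2 : S'.card = (Finset.univ.erase p).card - 1 := by
        rw [hS']
        exact Finset.card_erase_of_mem (Finset.mem_erase.mpr ⟨hpq.symm, Finset.mem_univ q⟩)
      omega
    have hS'mem : ∀ x, x ∈ S' ↔ (x ≠ q ∧ x ≠ p) := by
      intro x
      rw [hS', Finset.mem_erase, Finset.mem_erase]
      simp
    obtain ⟨j₀, hj₀S'⟩ : S'.Nonempty := Finset.card_pos.mp (by omega)
    have hj₀ : j₀ ≠ q ∧ j₀ ≠ p := (hS'mem j₀).mp hj₀S'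
    obtain ⟨L₁, hL₁len, hL₁good, hL₁pq, hL₁side, hL₁diag⟩ :=
      round M hi hsym h hhi Finset.univ p q j₀ (Finset.mem_univ p) (Finset.mem_univ q)
        (Finset.mem_univ j₀) hpq hj₀.2 hj₀.1 hmin
    obtain ⟨L₂, hL₂len, hL₂good, hL₂edge, hL₂diag⟩ :=
      mainQ M hi hsym h hhi (n - 2) S' j₀ (by omega) hj₀S' (by omega)
    have memL : ∀ v ∈ L₁, v ∈ L₁ ++ L₂ := fun v hv => List.mem_append_left _ hv
    have memR : ∀ v ∈ L₂, v ∈ L₁ ++ L₂ := fun v hv => List.mem_append_right _ hv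
    have roundE : ∀ i j : Fin n, i ≠ j → (i = p ∨ i = q) → Ach M L₁ i j := by
      intro i j hij hipq
      rcases hipq with rfl | rfl
      · by_cases hjq : j = q
        · subst hjq; exact hL₁pq
        · exact (hL₁side j (Finset.mem_univ j) (Ne.symm hij) hjq).1
      · by_cases hjp : j = p
        · subst hjp; exact Ach_symm M hsym hL₁pq
        · exact (hL₁side j (Finset.mem_univ j) hjp (Ne.symm hij)).2
    refine assemble M hi hhi _ (L₁ ++ L₂) ?_ ?_ ?_
    · -- length bound
      obtain ⟨k, hk⟩ : ∃ k, n = k + 2 := ⟨n - 2, by omega⟩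
      rw [hcardu] at hL₁len
      subst hk
      have e2 : (k + 2) ^ 2 = k ^ 2 + 4 * (k + 1) := by ring
      have e1 : (k + 2) ^ 2 / 4 = k ^ 2 / 4 + (k + 1) := by
        rw [e2, Nat.add_mul_div_left _ _ (by norm_num : 0 < 4)]
      have hle : k + 2 ≤ (k + 2) ^ 2 / 4 := by
        rw [Nat.le_div_iff_mul_le (by norm_num : 0 < 4)]
        calc (k + 2) * 4 ≤ (k + 2) * (k + 2) := Nat.mul_le_mul_left (k + 2) (by omega)
        _ = (k + 2) ^ 2 := by ring
      rw [max_eq_right hle, List.length_append, e1]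
      have hk2 : k + 2 - 2 = k := by omega
      rw [hk2] at hL₂len
      clear e2
      generalize hA : k ^ 2 / 4 = A at hL₂len ⊢
      omega
    · intro v hv
      rcases List.mem_append.mp hv with h' | h'
      · exact hL₁good v h'
      · exact hL₂good v h'
    · intro i j
      by_cases hij : i = j
      · subst hij
        by_cases hij₀ : i = j₀
        · subst hij₀; exact Ach_mono M memR hL₂diag
        · exact Ach_mono M memL (hL₁diag i (Finset.mem_univ i) hij₀)
      · by_cases hipq : i = p ∨ i = q
        · exact Ach_mono M memL (roundE i j hij hipq)
        · by_cases hjpq : j = p ∨ j = q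
          · exact Ach_symm M hsym (Ach_mono M memL (roundE j i (Ne.symm hij) hjpq))
          · push_neg at hipq hjpq
            have hiS' : i ∈ S' := (hS'mem i).mpr ⟨hipq.2, hipq.1⟩
            have hjS' : j ∈ S' := (hS'mem j).mpr ⟨hjpq.2, hjpq.1⟩
            exact Ach_mono M memR (hL₂edge i hiS' j hjS' hij)
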